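/- (Atkinson factorization) Let B be an associative unital Rota-Baxter algebra of weight θ with operator R, R̃ = -θ·id - R, and a ∈ B. With F = Σ_n t^n (Ra)^[n] and G = Σ_n t^n (R̃a)^{n} defined by the recursions (Ra)^[0] = 1, (Ra)^[n+1] = R((Ra)^[n]·a), (R̃a)^{0} = 1, (R̃a)^{n+1} = R̃(a·(R̃a)^{n}), one has the factorization F·(1 + aθt)·G = 1 in B[[t]]. -/

import Mathlib

open PowerSeries

section Aux
variable {K B : Type*} [CommRing K] [Ring B] [Algebra K B]

noncomputable def Rhat (R : B →ₗ[K] B) (f : PowerSeries B) : PowerSeries B :=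
  PowerSeries.mk fun n => R (PowerSeries.coeff n f)

variable (R : B →ₗ[K] B)

@[simp] lemma coeff_Rhat (n : ℕ) (f : PowerSeries B) :
    PowerSeries.coeff n (Rhat R f) = R (PowerSeries.coeff n f) :=
  PowerSeries.coeff_mk _ _

lemma Rhat_add (f g : PowerSeries B) : Rhat R (f + g) = Rhat R f + Rhat R g := by
  ext n; simp

lemma Rhat_sub (f g : PowerSeries B) : Rhat R (f - g) = Rhat R f - Rhat R g := by
  ext n; simp

lemma Rhat_neg (f : PowerSeries B) : Rhat R (-f) = -Rhat R f := by
  ext n; simp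

lemma Rhat_smul (θ : K) (f : PowerSeries B) : Rhat R (θ • f) = θ • Rhat R f := by
  ext n; simp

lemma Rhat_X_mul (f : PowerSeries B) : Rhat R (PowerSeries.X * f) = PowerSeries.X * Rhat R f := by
  ext n
  cases n with
  | zero => simp [PowerSeries.coeff_zero_eq_constantCoeff]
  | succ n => simp [PowerSeries.coeff_succ_X_mul]

lemma Rhat_RB (θ : K) (hRB : ∀ x y : B, R x * R y = R (R x * y + x * R y + θ • (x * y)))
    (f g : PowerSeries B) :
    Rhat R f * Rhat R g = Rhat R (Rhat R f * g + f * Rhat R g + θ • (f * g)) := by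
  ext n
  simp only [coeff_Rhat, map_add, map_smul, PowerSeries.coeff_mul, PowerSeries.coeff_smul,
    Finset.smul_sum, map_sum]
  rw [← Finset.sum_add_distrib, ← Finset.sum_add_distrib]
  refine Finset.sum_congr rfl fun p _ => ?_
  rw [hRB, map_add, map_add, map_smul]

lemma atkinson_aux (θ : K)
    (hRB : ∀ x y : B, R x * R y = R (R x * y + x * R y + θ • (x * y)))
    (F G A : PowerSeries B)
    (hF' : F = 1 + PowerSeries.X * Rhat R (F * A))
    (hG' : G = 1 + PowerSeries.X * (-(θ • (A * G)) - Rhat R (A * G))) :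
    F * (1 + (θ • A) * PowerSeries.X) * G = 1 := by
  have hcom1 : ∀ f : PowerSeries B, f * X = X * f := fun f => (PowerSeries.commute_X f).eq
  have hcom2 : ∀ f g : PowerSeries B, f * (X * g) = X * (f * g) := fun f g => by
    rw [← mul_assoc, hcom1, mul_assoc]
  have hFm : X * Rhat R (F * A) = F - 1 := by
    conv_rhs => rw [hF']
    abel
  have hGm : X * (-(θ • (A * G)) - Rhat R (A * G)) = G - 1 := by
    conv_rhs => rw [hG']
    abel
  have h2 : X * Rhat R (A * G) = 1 - G - θ • (X * (A * G)) := by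
    have h := hGm
    rw [mul_sub, mul_neg, mul_smul_comm, sub_eq_iff_eq_add] at h
    -- h : -(θ • (X * (A*G))) = G - 1 + X * Rhat R (A*G)
    have h2' : X * Rhat R (A * G) = -(θ • (X * (A * G))) - (G - 1) :=
      eq_sub_of_add_eq (by rw [add_comm]; exact h.symm)
    rw [h2']; abel
  have key : Rhat R (F * A) * (-(θ • (A * G)) - Rhat R (A * G))
      = -(θ • (Rhat R (F * A) * (A * G))) - Rhat R (Rhat R (F * A) * (A * G))
        + Rhat R ((F * A) * (-(θ • (A * G)) - Rhat R (A * G))) := by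
    simp only [mul_sub, mul_neg, mul_smul_comm, Rhat_RB R θ hRB, Rhat_sub, Rhat_neg,
      Rhat_smul, Rhat_add]
    abel
  set Q : PowerSeries B := A * G with hQdef
  set P : PowerSeries B := Rhat R (F * A) with hPdef
  set S : PowerSeries B := -(θ • Q) - Rhat R Q with hSdef
  have e1 : X * (P * Q) = (F - 1) * Q := by rw [← mul_assoc, hFm]
  have e2 : X * ((F * A) * S) = (F * A) * (G - 1) := by rw [← hcom2, hGm]
  have hFQ : (F * A) * G = F * Q := by rw [mul_assoc, hQdef]
  have hcross : (X * P) * (X * S)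
      = -(θ • (X * (F * Q))) + (1 - G - θ • (X * Q)) + θ • (X * Q) - (F - 1) := by
    calc (X * P) * (X * S)
        = X * (X * (P * S)) := by rw [mul_assoc, hcom2]
      _ = X * (X * (-(θ • (P * Q)) - Rhat R (P * Q) + Rhat R ((F * A) * S))) := by rw [key]
      _ = -(θ • (X * (X * (P * Q)))) - X * (X * Rhat R (P * Q))
            + X * (X * Rhat R ((F * A) * S)) := by
          simp only [mul_add, mul_sub, mul_neg, mul_smul_comm]
      _ = -(θ • (X * ((F - 1) * Q))) - X * Rhat R ((F - 1) * Q)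
            + X * Rhat R ((F * A) * (G - 1)) := by
          rw [← Rhat_X_mul R (P * Q), ← Rhat_X_mul R ((F * A) * S), e1, e2]
      _ = -(θ • (X * (F * Q) - X * Q)) - (X * Rhat R (F * Q) - X * Rhat R Q)
            + (X * Rhat R (F * Q) - X * Rhat R (F * A)) := by
          rw [sub_mul, one_mul, mul_sub (F * A) G 1, mul_one, hFQ, Rhat_sub, Rhat_sub]
          simp only [mul_sub]
      _ = -(θ • (X * (F * Q))) + (1 - G - θ • (X * Q)) + θ • (X * Q) - (F - 1) := by
          rw [h2, ← hPdef, hFm, smul_sub]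
          abel
  have hmain : F * G = 1 - θ • (X * (F * Q)) := by
    conv_lhs => rw [hF', hG']
    rw [add_mul, one_mul, mul_add, mul_one, hcross, hGm, hFm]
    abel
  have hfin : F * (1 + (θ • A) * X) * G = F * G + θ • (X * (F * Q)) := by
    simp only [mul_add, mul_one, add_mul, smul_mul_assoc, mul_smul_comm, mul_assoc, hcom2]
    rfl
  rw [hfin, hmain]
  abel

end Aux

/-- Atkinson factorization: with `F = Σ tⁿ (Ra)^[n]` and
`G = Σ tⁿ (R̃a)^{n}`, one has `F·(1 + aθt)·G = 1` in `B[[t]]`. -/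
theorem atkinson_factorization {K B : Type*} [CommRing K] [Ring B] [Algebra K B]
    (θ : K) (R : B →ₗ[K] B)
    (hRB : ∀ x y : B, R x * R y = R (R x * y + x * R y + θ • (x * y)))
    (Rt : B → B) (hRt : ∀ x, Rt x = -(θ • x) - R x)
    (a : B) (c d : ℕ → B)
    (hc0 : c 0 = 1) (hc : ∀ n, c (n + 1) = R (c n * a))
    (hd0 : d 0 = 1) (hd : ∀ n, d (n + 1) = Rt (a * d n))
    (F G : PowerSeries B) (hF : F = PowerSeries.mk c) (hG : G = PowerSeries.mk d) :
    F * (1 + PowerSeries.C (R := B) (θ • a) * PowerSeries.X) * G = 1 := by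
  have hC : PowerSeries.C (R := B) (θ • a) = θ • PowerSeries.C (R := B) a := by
    ext n
    simp only [PowerSeries.coeff_C, PowerSeries.coeff_smul]
    split_ifs <;> simp [PowerSeries.coeff_C, *]
  have hF'' : F = 1 + PowerSeries.X * Rhat R (F * PowerSeries.C (R := B) a) := by
    ext n
    cases n with
    | zero => simp [hF, hc0]
    | succ n =>
        simp [hF, hc, PowerSeries.coeff_succ_X_mul, PowerSeries.coeff_mul_C,
          PowerSeries.coeff_one]
  have hG'' : G = 1 + PowerSeries.X *
      (-(θ • (PowerSeries.C (R := B) a * G)) - Rhat R (PowerSeries.C (R := B) a * G)) := by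
    ext n
    cases n with
    | zero => simp [hG, hd0]
    | succ n =>
        simp [hG, hd, hRt, PowerSeries.coeff_succ_X_mul, PowerSeries.coeff_C_mul,
          PowerSeries.coeff_one, PowerSeries.coeff_smul]
  rw [hC]
  exact atkinson_aux R θ hRB F G (PowerSeries.C (R := B) a) hF'' hG''
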